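/- Let g ≥ 5 be odd and let G be the graph consisting of a cycle u_1, …, u_g of length g together with g additional pairwise non-adjacent vertices u'_1, …, u'_g, where each u'_i is adjacent exactly to the two neighbors of u_i on the cycle. Then G has odd-girth equal to g and G does not have the AOP property. -/

import Mathlib

open SimpleGraph

/-- The shift graph `G_{n,2}`: vertices are pairs `(i,j)` with `i < j` in `Fin n`,
and `(i,j)` is adjacent to `(k,l)` iff `j = k` or `l = i`. -/
def ShiftGraph (n : ℕ) : SimpleGraph {p : Fin n × Fin n // p.1 < p.2} :=
  SimpleGraph.fromRel (fun p q => p.1.2 = q.1.1)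

/-- The arcs of a digraph `D`. -/
def Arcs {V : Type} (D : V → V → Prop) : Type := {e : V × V // D e.1 e.2}

/-- The line digraph `L⃗(D)`: there is an arc from `(a,b)` to `(c,d)` iff `b = c`. -/
def LineDigraph {V : Type} (D : V → V → Prop) : Arcs D → Arcs D → Prop :=
  fun e f => e.1.2 = f.1.1

/-- The underlying undirected (simple) graph of a digraph. -/
def UG {V : Type} (D : V → V → Prop) : SimpleGraph V := SimpleGraph.fromRel D

/-- The undirected line graph `L(D)`: the underlying undirected graph of the line digraph,
in which two arcs are adjacent iff the head of one equals the tail of the other. -/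
def LineGraph {V : Type} (D : V → V → Prop) : SimpleGraph (Arcs D) :=
  UG (LineDigraph D)

/-- A digraph is an oriented graph if its arc relation is irreflexive and between any
two vertices at most one of the two opposite arcs is present. -/
def Oriented {V : Type} (D : V → V → Prop) : Prop :=
  Irreflexive D ∧ ∀ a b, D a b → ¬ D b a

/-- A digraph is acyclic if it contains no directed cycle, equivalently no vertex is
reachable from itself by a nonempty directed walk. -/
def DigraphAcyclic {V : Type} (D : V → V → Prop) : Prop :=
  ∀ v, ¬ Relation.TransGen D v v

/-- The iterated line digraph: `(IterLine V D g).1` is the vertex type of `L⃗^g(D)` and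
`(IterLine V D g).2` is its arc relation. -/
def IterLine (V : Type) (D : V → V → Prop) : ℕ → (W : Type) × (W → W → Prop)
  | 0 => ⟨V, D⟩
  | g + 1 => ⟨Arcs (IterLine V D g).2, LineDigraph (IterLine V D g).2⟩

/-- `l` is (the list of vertices of) a directed path from `x` to `y` in the digraph `D`:
consecutive vertices are joined by arcs, the vertices are pairwise distinct, and the
list starts at `x` and ends at `y`. -/
def IsDipath {V : Type} (D : V → V → Prop) (x y : V) (l : List V) : Prop :=
  l.Chain' D ∧ l.head? = some x ∧ l.getLast? = some y ∧ l.Nodup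

/-- A digraph has at most one directed path from any vertex to any other vertex. -/
def UniqueDipaths {V : Type} (D : V → V → Prop) : Prop :=
  ∀ x y l₁ l₂, IsDipath D x y l₁ → IsDipath D x y l₂ → l₁ = l₂

/-- `D` is an orientation of the simple graph `G`. -/
def IsOrientationOf {V : Type} (G : SimpleGraph V) (D : V → V → Prop) : Prop :=
  (∀ a b, D a b → G.Adj a b) ∧ (∀ a b, G.Adj a b → (D a b ∨ D b a)) ∧
    (∀ a b, D a b → ¬ D b a)

/-- A simple graph has the AOP property if it admits an acyclic orientation with at most
one directed path between any ordered pair of vertices. -/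
def HasAOP {V : Type} (G : SimpleGraph V) : Prop :=
  ∃ D : V → V → Prop, IsOrientationOf G D ∧ DigraphAcyclic D ∧ UniqueDipaths D

/-- The tower function: `Tower g x` is `2^(2^(⋯^x))` with `g` twos. -/
def Tower : ℕ → ℕ → ℕ
  | 0, x => x
  | i + 1, x => 2 ^ Tower i x

/-- The graph `G` has degeneracy at most `k`: every nonempty (induced subgraph on a) set
of vertices contains a vertex with at most `k` neighbours inside the set. -/
def DegenLE {V : Type} (G : SimpleGraph V) (k : ℕ) : Prop :=
  ∀ s : Set V, s.Nonempty → ∃ v ∈ s, ({u ∈ s | G.Adj v u} : Set V).ncard ≤ k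

/-- The relation generating the graph of Theorem `high odd girth graphs not in AOP`:
the vertices are `Fin g ⊕ Fin g`, where `Sum.inl i` is the cycle vertex `u_i` and
`Sum.inr i` is the extra vertex `u'_i`; consecutive cycle vertices are related, and
`u'_i` is related to the two cyclic neighbours `u_{i+1}` and `u_{i-1}` of `u_i`. -/
def paperRel (g : ℕ) : (Fin g ⊕ Fin g) → (Fin g ⊕ Fin g) → Prop
  | Sum.inl i, Sum.inl j => (j : ℕ) = ((i : ℕ) + 1) % g
  | Sum.inr i, Sum.inl j => (j : ℕ) = ((i : ℕ) + 1) % g ∨ ((j : ℕ) + 1) % g = (i : ℕ)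
  | _, _ => False

/-- The graph consisting of a `g`-cycle `u_1, …, u_g` together with `g` pairwise
non-adjacent extra vertices `u'_1, …, u'_g`, where `u'_i` is adjacent exactly to the
two neighbours of `u_i` on the cycle. -/
def paperGraph (g : ℕ) : SimpleGraph (Fin g ⊕ Fin g) :=
  SimpleGraph.fromRel (paperRel g)


section AOPAux

private def vvv (g : ℕ) (hg : 0 < g) (k : ℕ) : Fin g ⊕ Fin g :=
  Sum.inl ⟨k % g, Nat.mod_lt k hg⟩

private def uuu (g : ℕ) (hg : 0 < g) (k : ℕ) : Fin g ⊕ Fin g :=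
  Sum.inr ⟨k % g, Nat.mod_lt k hg⟩

private lemma vvv_inj {g : ℕ} {hg : 0 < g} {a b : ℕ} :
    vvv g hg a = vvv g hg b ↔ a % g = b % g := by
  simp [vvv, Fin.ext_iff]

private lemma mod_ne_add {g k d : ℕ} (hd : 0 < d) (hdg : d < g) :
    k % g ≠ (k + d) % g := by
  intro h
  have h2 : (g : ℤ) ∣ ((k + d : ℕ) : ℤ) - (k : ℤ) := Nat.ModEq.dvd h
  have h3 : (g : ℤ) ∣ (d : ℤ) := by push_cast at h2; simpa using h2
  rw [Int.natCast_dvd_natCast] at h3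
  have := Nat.le_of_dvd hd h3
  omega

private lemma adj_vvv {g : ℕ} (hg5 : 5 ≤ g) (hg : 0 < g) (k : ℕ) :
    (paperGraph g).Adj (vvv g hg k) (vvv g hg (k + 1)) := by
  rw [paperGraph, SimpleGraph.fromRel_adj]
  refine ⟨?_, Or.inl ?_⟩
  · rw [Ne, vvv_inj]
    exact mod_ne_add one_pos (by omega)
  · show ((k + 1) % g : ℕ) = (k % g + 1) % g
    rw [Nat.mod_add_mod]

private lemma adj_uuu_left {g : ℕ} (hg : 0 < g) (k : ℕ) :
    (paperGraph g).Adj (uuu g hg (k + 1)) (vvv g hg k) := by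
  rw [paperGraph, SimpleGraph.fromRel_adj]
  refine ⟨by simp [uuu, vvv], Or.inl (Or.inr ?_)⟩
  show (k % g + 1) % g = (k + 1) % g
  rw [Nat.mod_add_mod]

private lemma adj_uuu_right {g : ℕ} (hg : 0 < g) (k : ℕ) :
    (paperGraph g).Adj (uuu g hg (k + 1)) (vvv g hg (k + 2)) := by
  rw [paperGraph, SimpleGraph.fromRel_adj]
  refine ⟨by simp [uuu, vvv], Or.inl (Or.inl ?_)⟩
  show (k + 2) % g = ((k + 1) % g + 1) % g
  rw [Nat.mod_add_mod]

private lemma vvv_eq_iff_of_le {g : ℕ} {hg : 0 < g} {a b : ℕ} (ha : a ≤ g) (hb : b ≤ g) :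
    vvv g hg a = vvv g hg b ↔ (a = b ∨ (a = 0 ∧ b = g) ∨ (a = g ∧ b = 0)) := by
  have ra : a % g = if a = g then 0 else a := by
    split_ifs with h
    · simp [h, Nat.mod_self]
    · exact Nat.mod_eq_of_lt (by omega)
  have rb : b % g = if b = g then 0 else b := by
    split_ifs with h
    · simp [h, Nat.mod_self]
    · exact Nat.mod_eq_of_lt (by omega)
  rw [vvv_inj, ra, rb]
  split_ifs <;> omega

/-! ### The explicit Hamiltonian-type cycle on the `g`-cycle part -/

private def cyc (g : ℕ) (hg : 0 < g) (hg5 : 5 ≤ g) :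
    (k : ℕ) → (paperGraph g).Walk (vvv g hg 0) (vvv g hg k)
  | 0 => Walk.nil
  | k + 1 => (cyc g hg hg5 k).concat (adj_vvv hg5 hg k)

private lemma cyc_length {g : ℕ} (hg : 0 < g) (hg5 : 5 ≤ g) (k : ℕ) :
    (cyc g hg hg5 k).length = k := by
  induction k with
  | zero => rfl
  | succ n ih => simp [cyc, Walk.length_concat, ih]

private lemma cyc_support {g : ℕ} (hg : 0 < g) (hg5 : 5 ≤ g) (k : ℕ) :
    (cyc g hg hg5 k).support = (List.range (k + 1)).map (vvv g hg) := by
  induction k with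
  | zero => simp [cyc, List.range_succ]
  | succ n ih => simp [cyc, Walk.support_concat, ih, List.range_succ]

private lemma cyc_edges {g : ℕ} (hg : 0 < g) (hg5 : 5 ≤ g) (k : ℕ) :
    (cyc g hg hg5 k).edges
      = (List.range k).map (fun j => s(vvv g hg j, vvv g hg (j + 1))) := by
  induction k with
  | zero => simp [cyc]
  | succ n ih => simp [cyc, Walk.edges_concat, ih, List.range_succ]

private lemma cyc_isCycle {g : ℕ} (hg : 0 < g) (hg5 : 5 ≤ g)
    (e0 : vvv g hg g = vvv g hg 0) :
    ((cyc g hg hg5 g).copy rfl e0).IsCycle := by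
  rw [Walk.isCycle_def]
  refine ⟨?_, ?_, ?_⟩
  · rw [Walk.isTrail_def, Walk.edges_copy, cyc_edges]
    refine (List.nodup_range (n := g)).map_on ?_
    intro i hi j hj hij
    rw [List.mem_range] at hi hj
    rw [Sym2.eq_iff] at hij
    rcases hij with ⟨h1, h2⟩ | ⟨h1, h2⟩ <;>
      rw [vvv_eq_iff_of_le (by omega) (by omega)] at h1 h2 <;> omega
  · intro h
    have := cyc_length hg hg5 g
    rw [← Walk.length_copy _ rfl e0, h] at this
    simp at this
    omega
  · rw [Walk.support_copy, cyc_support, List.range_succ_eq_map]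
    rw [List.map_cons, List.tail_cons, List.map_map]
    refine (List.nodup_range (n := g)).map_on ?_
    intro i hi j hj hij
    rw [List.mem_range] at hi hj
    simp only [Function.comp] at hij
    rw [vvv_eq_iff_of_le (by omega) (by omega)] at hij
    omega

/-! ### The `ZMod g`-valued potential function, for the odd-girth lower bound -/

private def FF (g : ℕ) : Fin g ⊕ Fin g → ZMod g :=
  fun x => ((Sum.elim Fin.val Fin.val x : ℕ) : ZMod g)

private lemma castmod {g : ℕ} (a : ℕ) :
    (((a + 1) % g : ℕ) : ZMod g) = (a : ZMod g) + 1 := by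
  rw [ZMod.natCast_mod]; push_cast; ring

private lemma Fstep {g : ℕ} {x y : Fin g ⊕ Fin g} (h : (paperGraph g).Adj x y) :
    FF g y = FF g x + 1 ∨ FF g y + 1 = FF g x := by
  rw [paperGraph, SimpleGraph.fromRel_adj] at h
  obtain ⟨-, h | h⟩ := h <;>
      rcases x with i | i <;> rcases y with j | j <;>
      simp only [paperRel] at h <;>
      simp only [FF, Sum.elim_inl, Sum.elim_inr]
  · left; rw [h]; exact castmod _
  · rcases h with h | h
    · left; rw [h]; exact castmod _
    · right; rw [← h]; exact (castmod _).symm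
  · right; rw [h]; exact (castmod _).symm
  · rcases h with h | h
    · right; rw [h]; exact (castmod _).symm
    · left; rw [← h]; exact castmod _

private lemma walk_key {g : ℕ} {x y : Fin g ⊕ Fin g} (w : (paperGraph g).Walk x y) :
    ∃ a b : ℕ, a + b = w.length ∧ FF g y + (b : ZMod g) = FF g x + (a : ZMod g) := by
  induction w with
  | nil => exact ⟨0, 0, rfl, by simp⟩
  | cons h p ih =>
    obtain ⟨a, b, hab, he⟩ := ih
    rcases Fstep h with hs | hs
    · exact ⟨a + 1, b, by simp [SimpleGraph.Walk.length_cons]; omega,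
        by push_cast; linear_combination he + hs⟩
    · exact ⟨a, b + 1, by simp [SimpleGraph.Walk.length_cons]; omega,
        by push_cast; linear_combination he + hs⟩

/-! ### The AOP contradiction for a directed 2-path plus an extra vertex -/

private lemma aop_core {V : Type} {G : SimpleGraph V} {D : V → V → Prop}
    (hor : IsOrientationOf G D) (hacy : DigraphAcyclic D) (hu : UniqueDipaths D)
    {a b c p : V} (hab : D a b) (hbc : D b c)
    (hpa : G.Adj p a) (hpc : G.Adj p c)
    (hac2 : a ≠ c) (hpa2 : p ≠ a) (hpb : p ≠ b) (hpc2 : p ≠ c) : False := by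
  obtain ⟨hfwd, hchoice, _⟩ := hor
  have hab2 : a ≠ b := (hfwd a b hab).ne
  have hbc2 : b ≠ c := (hfwd b c hbc).ne
  rcases hchoice p a hpa with h1 | h1 <;> rcases hchoice p c hpc with h2 | h2
  · have e := hu p c [p, c] [p, a, b, c]
      ⟨by simp [List.Chain', h2], rfl, by simp, by simp [hpc2]⟩
      ⟨by simp [List.Chain', h1, hab, hbc], rfl, by simp,
        by simp [hpa2, hpb, hpc2, hab2, hac2, hbc2]⟩
    simp at e
  · exact hacy p (.head h1 (.head hab (.head hbc (.single h2))))
  · have e := hu a c [a, b, c] [a, p, c]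
      ⟨by simp [List.Chain', hab, hbc], rfl, by simp, by simp [hab2, hac2, hbc2]⟩
      ⟨by simp [List.Chain', h1, h2], rfl, by simp, by simp [Ne.symm hpa2, hac2, hpc2]⟩
    simp at e
    exact hpb e.symm
  · have e := hu a p [a, p] [a, b, c, p]
      ⟨by simp [List.Chain', h1], rfl, by simp, by simp [Ne.symm hpa2]⟩
      ⟨by simp [List.Chain', hab, hbc, h2], rfl, by simp,
        by simp [hab2, hac2, hbc2, Ne.symm hpa2, Ne.symm hpb, Ne.symm hpc2]⟩
    simp at e

end AOPAux

/-- For odd `g ≥ 5`, the graph above has odd-girth equal to `g`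
(every odd cycle has at least `g` edges, and some cycle has exactly `g` edges) and does
not have the AOP property. -/
theorem stmt_14 (g : ℕ) (hg5 : 5 ≤ g) (hgodd : Odd g) :
    ((∀ (v : Fin g ⊕ Fin g) (w : (paperGraph g).Walk v v),
        w.IsCycle → Odd w.length → g ≤ w.length) ∧
      ∃ (v : Fin g ⊕ Fin g) (w : (paperGraph g).Walk v v),
        w.IsCycle ∧ w.length = g) ∧
    ¬ HasAOP (paperGraph g) := by
  have hg : 0 < g := by omega
  haveI : NeZero g := ⟨by omega⟩
  have e0 : vvv g hg g = vvv g hg 0 := vvv_inj.mpr (by rw [Nat.mod_self, Nat.zero_mod])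
  refine ⟨⟨?_, ?_⟩, ?_⟩
  · -- every odd closed walk has length at least g
    intro v w _ hodd
    by_contra hlt
    push_neg at hlt
    obtain ⟨a, b, hab, he⟩ := walk_key w
    have hba : (b : ZMod g) = (a : ZMod g) := add_left_cancel he
    have hba' : b = a := by
      have h := congrArg ZMod.val hba
      rwa [ZMod.val_cast_of_lt (by omega), ZMod.val_cast_of_lt (by omega)] at h
    obtain ⟨t, ht⟩ := hodd
    omega
  · -- there is a cycle of length exactly g
    exact ⟨vvv g hg 0, (cyc g hg hg5 g).copy rfl e0, cyc_isCycle hg hg5 e0,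
      by rw [Walk.length_copy, cyc_length]⟩
  · -- no AOP
    rintro ⟨D, hor, hacy, huni⟩
    by_cases hex : ∃ k : ℕ,
        (D (vvv g hg k) (vvv g hg (k + 1)) ∧
          D (vvv g hg (k + 1)) (vvv g hg (k + 1 + 1))) ∨
        (¬ D (vvv g hg k) (vvv g hg (k + 1)) ∧
          ¬ D (vvv g hg (k + 1)) (vvv g hg (k + 1 + 1)))
    · obtain ⟨k, hk⟩ := hex
      have hne_ac : vvv g hg k ≠ vvv g hg (k + 2) := by
        rw [Ne, vvv_inj]
        exact mod_ne_add two_pos (by omega)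
      have hp1 : uuu g hg (k + 1) ≠ vvv g hg k := by simp [uuu, vvv]
      have hp2 : uuu g hg (k + 1) ≠ vvv g hg (k + 1) := by simp [uuu, vvv]
      have hp3 : uuu g hg (k + 1) ≠ vvv g hg (k + 2) := by simp [uuu, vvv]
      rcases hk with ⟨h1, h2⟩ | ⟨h1, h2⟩
      · exact aop_core hor hacy huni h1 h2 (adj_uuu_left hg k) (adj_uuu_right hg k)
          hne_ac hp1 hp2 hp3
      · have b1 : D (vvv g hg (k + 1)) (vvv g hg k) :=
          (hor.2.1 _ _ (adj_vvv hg5 hg k)).resolve_left h1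
        have b2 : D (vvv g hg (k + 1 + 1)) (vvv g hg (k + 1)) :=
          (hor.2.1 _ _ (adj_vvv hg5 hg (k + 1))).resolve_left h2
        exact aop_core hor hacy huni b2 b1 (adj_uuu_right hg k) (adj_uuu_left hg k)
          hne_ac.symm hp3 hp2 hp1
    · -- otherwise the orientation of the cycle alternates, impossible for odd g
      have hflip : ∀ k : ℕ, D (vvv g hg (k + 1)) (vvv g hg (k + 1 + 1)) ↔
          ¬ D (vvv g hg k) (vvv g hg (k + 1)) := by
        intro k
        have h := not_exists.mp hex k
        tauto
      have hpar : ∀ k : ℕ,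
          (Even k → (D (vvv g hg k) (vvv g hg (k + 1)) ↔
            D (vvv g hg 0) (vvv g hg 1))) ∧
          (¬ Even k → (D (vvv g hg k) (vvv g hg (k + 1)) ↔
            ¬ D (vvv g hg 0) (vvv g hg 1))) := by
        intro k
        induction k with
        | zero => simp
        | succ n ih =>
          have hf := hflip n
          have hpn : Even (n + 1) ↔ ¬ Even n := Nat.even_add_one
          constructor <;> intro hev
          · have hn : ¬ Even n := hpn.mp hev
            have := ih.2 hn
            tauto
          · have hn : Even n := by tauto
            have := ih.1 hn
            tauto
      have hgodd' : ¬ Even g := Nat.not_even_iff_odd.mpr hgodd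
      have h1 := (hpar g).2 hgodd'
      have e1 : vvv g hg (g + 1) = vvv g hg 1 := vvv_inj.mpr (Nat.add_mod_left g 1)
      rw [e0, e1] at h1
      tauto
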